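/- Suppose v ≥ 3ρ + 12 and (X, B) is a PSTS(v) whose maximum partial parallel class has size ρ. Then the number of blocks is at most ρ(6ρ + v - 7)/2. -/

import Mathlib

theorem stmt_12 {X : Type*} [Fintype X] [DecidableEq X] (ρ : ℕ)
    (hv : 3 * ρ + 12 ≤ Fintype.card X)
    (B : Finset (Finset X))
    (hcard : ∀ b ∈ B, b.card = 3)
    (hpair : ∀ x y : X, x ≠ y → (B.filter (fun b => x ∈ b ∧ y ∈ b)).card ≤ 1)
    (hex : ∃ P ⊆ B, (∀ b1 ∈ P, ∀ b2 ∈ P, b1 ≠ b2 → Disjoint b1 b2) ∧ P.card = ρ)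
    (hmax : ∀ P ⊆ B, (∀ b1 ∈ P, ∀ b2 ∈ P, b1 ≠ b2 → Disjoint b1 b2) → P.card ≤ ρ) :
    (B.card : ℚ) ≤ (ρ : ℚ) * (6 * (ρ : ℚ) + (Fintype.card X : ℚ) - 7) / 2 := by
  classical
  have hne : Nonempty X := Fintype.card_pos_iff.mp (by omega)
  obtain ⟨P, hPB, hPdisj, hPcard⟩ := hex
  -- blocks sharing two distinct points are equal
  have eqblk : ∀ b1 ∈ B, ∀ b2 ∈ B, ∀ x y : X, x ≠ y → x ∈ b1 → y ∈ b1 → x ∈ b2 → y ∈ b2 → b1 = b2 := by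
    intro b1 hb1 b2 hb2 x y hxy h1x h1y h2x h2y
    have h := hpair x y hxy
    rw [Finset.card_le_one] at h
    exact h b1 (Finset.mem_filter.mpr ⟨hb1, h1x, h1y⟩) b2 (Finset.mem_filter.mpr ⟨hb2, h2x, h2y⟩)
  set S : Finset X := P.biUnion id with hSdef
  have hPS : ∀ p ∈ P, p ⊆ S := fun p hp => Finset.subset_biUnion_of_mem id hp
  have hScard : S.card = 3 * ρ := by
    rw [hSdef, Finset.card_biUnion]
    · simp only [id_eq]
      rw [Finset.sum_congr rfl (fun p hp => hcard p (hPB hp))]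
      simp [hPcard, mul_comm]
    · exact fun b1 h1 b2 h2 hne => hPdisj b1 h1 b2 h2 hne
  -- every block meets S
  have hmeet : ∀ b ∈ B, (b ∩ S).Nonempty := by
    intro b hb
    by_contra h
    rw [Finset.not_nonempty_iff_eq_empty, ← Finset.disjoint_iff_inter_eq_empty] at h
    have hbP : b ∉ P := by
      intro hbP
      have hsub : b ⊆ S := hPS b hbP
      have hb3 := hcard b hb
      have hbe : b = ∅ :=
        Finset.eq_empty_of_forall_notMem (fun x hx => (Finset.disjoint_left.mp h hx (hsub hx)))
      simp [hbe] at hb3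
    have hsub : insert b P ⊆ B := Finset.insert_subset hb hPB
    have hd : ∀ b1 ∈ insert b P, ∀ b2 ∈ insert b P, b1 ≠ b2 → Disjoint b1 b2 := by
      intro b1 h1 b2 h2 hne
      rcases Finset.mem_insert.mp h1 with rfl | hm1
      · rcases Finset.mem_insert.mp h2 with rfl | hm2
        · exact absurd rfl hne
        · exact Finset.disjoint_left.mpr fun a ha hab =>
            Finset.disjoint_left.mp h ha (hPS _ hm2 hab)
      · rcases Finset.mem_insert.mp h2 with rfl | hm2
        · exact Finset.disjoint_right.mpr fun a ha hab =>
            Finset.disjoint_left.mp h ha (hPS _ hm1 hab)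
        · exact hPdisj _ hm1 _ hm2 hne
    have := hmax _ hsub hd
    rw [Finset.card_insert_of_notMem hbP, hPcard] at this
    omega
  set B1 := B.filter (fun b => (b ∩ S).card = 1) with hB1def
  set B2 := B.filter (fun b => 2 ≤ (b ∩ S).card) with hB2def
  have hB1B : B1 ⊆ B := Finset.filter_subset _ _
  have hB2B : B2 ⊆ B := Finset.filter_subset _ _
  have hsplit : B.card = B1.card + B2.card := by
    have hB2alt : B2 = B.filter (fun b => ¬ ((b ∩ S).card = 1)) := by
      apply Finset.filter_congr
      intro b hb
      have h1 : 0 < (b ∩ S).card := Finset.card_pos.mpr (hmeet b hb)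
      constructor
      · intro h2; omega
      · intro h2; omega
    rw [hB1def, hB2alt, Finset.card_filter_add_card_filter_not]
  have hPB2 : P ⊆ B2 := by
    intro p hp
    refine Finset.mem_filter.mpr ⟨hPB hp, ?_⟩
    rw [Finset.inter_eq_left.mpr (hPS p hp), hcard p (hPB hp)]
    omega
  -- singleton structure of B1 blocks
  have hB1card : ∀ b ∈ B1, (b ∩ S).card = 1 := fun b hb => (Finset.mem_filter.mp hb).2
  have hB1single : ∀ b ∈ B1, ∀ x ∈ b ∩ S, ∀ y ∈ b ∩ S, x = y := by
    intro b hb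
    exact Finset.card_le_one.mp (le_of_eq (hB1card b hb))
  have houtcard : ∀ b ∈ B1, (b \ S).card = 2 := by
    intro b hb
    have h := Finset.card_inter_add_card_sdiff b S
    rw [hB1card b hb, hcard b (hB1B hb)] at h
    omega
  have hB1nP : ∀ b ∈ B1, b ∉ P := by
    intro b hb hbP
    have h := hB1card b hb
    rw [Finset.inter_eq_left.mpr (hPS b hbP), hcard b (hPB hbP)] at h
    omega
  ------------------------------------------------------------------
  -- Bound on B2
  ------------------------------------------------------------------
  have hgex : ∀ b : Finset X, ∃ t : Finset X, b ∈ B2 → t ⊆ b ∩ S ∧ t.card = 2 := by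
    intro b
    by_cases hb : b ∈ B2
    · obtain ⟨t, ht, htc⟩ := Finset.exists_subset_card_eq (Finset.mem_filter.mp hb).2
      exact ⟨t, fun _ => ⟨ht, htc⟩⟩
    · exact ⟨∅, fun h => absurd h hb⟩
  choose g hg using hgex
  have hkey2 : (B2 \ P).card + 3 * ρ ≤ (3 * ρ).choose 2 := by
    have hT2d : ∀ p1 ∈ P, ∀ p2 ∈ P, p1 ≠ p2 →
        Disjoint (Finset.powersetCard 2 p1) (Finset.powersetCard 2 p2) := by
      intro p1 h1 p2 h2 hne
      rw [Finset.disjoint_left]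
      intro t ht1 ht2
      obtain ⟨hts1, htc⟩ := Finset.mem_powersetCard.mp ht1
      obtain ⟨hts2, _⟩ := Finset.mem_powersetCard.mp ht2
      obtain ⟨z, hz⟩ := Finset.card_pos.mp (by omega : 0 < t.card)
      exact Finset.disjoint_left.mp (hPdisj p1 h1 p2 h2 hne) (hts1 hz) (hts2 hz)
    have hc2 : (P.biUnion (fun p => Finset.powersetCard 2 p)).card = 3 * ρ := by
      rw [Finset.card_biUnion hT2d]
      have : ∀ p ∈ P, (Finset.powersetCard 2 p).card = 3 := by
        intro p hp
        rw [Finset.card_powersetCard, hcard p (hPB hp)]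
        rfl
      rw [Finset.sum_congr rfl this]
      simp [hPcard, mul_comm]
    have hginj : Set.InjOn g ↑(B2 \ P) := by
      intro b1 hb1 b2 hb2 heq
      simp only [Finset.coe_sdiff, Set.mem_diff, Finset.mem_coe] at hb1 hb2
      obtain ⟨hsub1, hc1⟩ := hg b1 hb1.1
      obtain ⟨hsub2, _⟩ := hg b2 hb2.1
      obtain ⟨x, y, hxy, hGxy⟩ := Finset.card_eq_two.mp hc1
      have hx1 : x ∈ g b1 := by rw [hGxy]; simp
      have hy1 : y ∈ g b1 := by rw [hGxy]; simp
      have hx2 : x ∈ g b2 := by rw [← heq]; exact hx1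
      have hy2 : y ∈ g b2 := by rw [← heq]; exact hy1
      exact eqblk b1 (hB2B hb1.1) b2 (hB2B hb2.1) x y hxy
        (Finset.mem_of_mem_inter_left (hsub1 hx1)) (Finset.mem_of_mem_inter_left (hsub1 hy1))
        (Finset.mem_of_mem_inter_left (hsub2 hx2)) (Finset.mem_of_mem_inter_left (hsub2 hy2))
    have hc1 : ((B2 \ P).image g).card = (B2 \ P).card := Finset.card_image_of_injOn hginj
    have hdisj : Disjoint ((B2 \ P).image g) (P.biUnion (fun p => Finset.powersetCard 2 p)) := by
      rw [Finset.disjoint_left]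
      intro t ht1 ht2
      obtain ⟨b, hb, rfl⟩ := Finset.mem_image.mp ht1
      obtain ⟨hbB2, hbnP⟩ := Finset.mem_sdiff.mp hb
      obtain ⟨p, hp, htp⟩ := Finset.mem_biUnion.mp ht2
      obtain ⟨htsp, htc⟩ := Finset.mem_powersetCard.mp htp
      obtain ⟨hsub, hc⟩ := hg b hbB2
      obtain ⟨x, y, hxy, hGxy⟩ := Finset.card_eq_two.mp hc
      have hx : x ∈ g b := by rw [hGxy]; simp
      have hy : y ∈ g b := by rw [hGxy]; simp
      have : b = p := eqblk b (hB2B hbB2) p (hPB hp) x y hxy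
        (Finset.mem_of_mem_inter_left (hsub hx)) (Finset.mem_of_mem_inter_left (hsub hy))
        (htsp hx) (htsp hy)
      exact hbnP (this ▸ hp)
    have hsubT : ((B2 \ P).image g) ∪ (P.biUnion (fun p => Finset.powersetCard 2 p))
        ⊆ Finset.powersetCard 2 S := by
      intro t ht
      rcases Finset.mem_union.mp ht with ht | ht
      · obtain ⟨b, hb, rfl⟩ := Finset.mem_image.mp ht
        obtain ⟨hbB2, _⟩ := Finset.mem_sdiff.mp hb
        obtain ⟨hsub, hc⟩ := hg b hbB2
        exact Finset.mem_powersetCard.mpr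
          ⟨hsub.trans (Finset.inter_subset_right), hc⟩
      · obtain ⟨p, hp, htp⟩ := Finset.mem_biUnion.mp ht
        obtain ⟨htsp, htc⟩ := Finset.mem_powersetCard.mp htp
        exact Finset.mem_powersetCard.mpr ⟨htsp.trans (hPS p hp), htc⟩
    calc (B2 \ P).card + 3 * ρ
        = ((B2 \ P).image g ∪ P.biUnion (fun p => Finset.powersetCard 2 p)).card := by
          rw [Finset.card_union_of_disjoint hdisj, hc1, hc2]
      _ ≤ (Finset.powersetCard 2 S).card := Finset.card_le_card hsubT
      _ = (3 * ρ).choose 2 := by rw [Finset.card_powersetCard, hScard]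
  ------------------------------------------------------------------
  -- Bound on B1
  ------------------------------------------------------------------
  -- blocks of B1 through a common point have disjoint outside pairs
  have houtdisj : ∀ x ∈ S, ∀ b1 ∈ B1.filter (fun b => x ∈ b), ∀ b2 ∈ B1.filter (fun b => x ∈ b),
      b1 ≠ b2 → Disjoint (b1 \ S) (b2 \ S) := by
    intro x hxS b1 hb1 b2 hb2 hne
    obtain ⟨hb1B1, hxb1⟩ := Finset.mem_filter.mp hb1
    obtain ⟨hb2B1, hxb2⟩ := Finset.mem_filter.mp hb2
    rw [Finset.disjoint_left]
    intro z hz1 hz2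
    obtain ⟨hzb1, hzS⟩ := Finset.mem_sdiff.mp hz1
    obtain ⟨hzb2, _⟩ := Finset.mem_sdiff.mp hz2
    have hxz : x ≠ z := fun h => hzS (h ▸ hxS)
    exact hne (eqblk b1 (hB1B hb1B1) b2 (hB1B hb2B1) x z hxz hxb1 hzb1 hxb2 hzb2)
  -- point degree bound via disjoint outside pairs
  have hdx : ∀ x ∈ S, 2 * (B1.filter (fun b => x ∈ b)).card + 3 * ρ ≤ Fintype.card X := by
    intro x hxS
    set Bx := B1.filter (fun b => x ∈ b) with hBx
    have hU : (Bx.biUnion (fun b => b \ S)).card = 2 * Bx.card := by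
      rw [Finset.card_biUnion (fun b1 h1 b2 h2 hne => houtdisj x hxS b1 h1 b2 h2 hne)]
      rw [Finset.sum_congr rfl (fun b hb => houtcard b (Finset.mem_filter.mp hb).1)]
      simp [mul_comm]
      rfl
    have hUd : Disjoint (Bx.biUnion (fun b => b \ S)) S := by
      rw [Finset.disjoint_left]
      intro z hz hzS
      obtain ⟨b, hb, hzb⟩ := Finset.mem_biUnion.mp hz
      exact (Finset.mem_sdiff.mp hzb).2 hzS
    have := Finset.card_le_card (Finset.subset_univ ((Bx.biUnion (fun b => b \ S)) ∪ S))
    rw [Finset.card_union_of_disjoint hUd, hU, hScard, Finset.card_univ] at this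
    exact this
  -- cross lemma: one-point blocks through distinct points of the same P-block
  -- have intersecting outside pairs
  have hcross : ∀ p ∈ P, ∀ x ∈ p, ∀ y ∈ p, x ≠ y →
      ∀ b1 ∈ B1.filter (fun b => x ∈ b), ∀ b2 ∈ B1.filter (fun b => y ∈ b),
      ¬ Disjoint (b1 \ S) (b2 \ S) := by
    intro p hp x hxp y hyp hxy b1 hb1 b2 hb2 hout
    obtain ⟨hb1B1, hxb1⟩ := Finset.mem_filter.mp hb1
    obtain ⟨hb2B1, hyb2⟩ := Finset.mem_filter.mp hb2
    have hxS : x ∈ S := hPS p hp hxp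
    have hyS : y ∈ S := hPS p hp hyp
    have hb1S : ∀ z ∈ b1 ∩ S, z = x :=
      fun z hz => hB1single b1 hb1B1 z hz x (Finset.mem_inter.mpr ⟨hxb1, hxS⟩)
    have hb2S : ∀ z ∈ b2 ∩ S, z = y :=
      fun z hz => hB1single b2 hb2B1 z hz y (Finset.mem_inter.mpr ⟨hyb2, hyS⟩)
    have hne12 : b1 ≠ b2 := by
      intro h
      subst h
      exact hxy ((hb1S y (Finset.mem_inter.mpr ⟨hyb2, hyS⟩)).symm ▸ rfl)
    have hd12 : Disjoint b1 b2 := by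
      rw [Finset.disjoint_left]
      intro z hz1 hz2
      by_cases hzS : z ∈ S
      · have e1 : z = x := hb1S z (Finset.mem_inter.mpr ⟨hz1, hzS⟩)
        have e2 : z = y := hb2S z (Finset.mem_inter.mpr ⟨hz2, hzS⟩)
        exact hxy (e1 ▸ e2)
      · exact (Finset.disjoint_left.mp hout (Finset.mem_sdiff.mpr ⟨hz1, hzS⟩))
          (Finset.mem_sdiff.mpr ⟨hz2, hzS⟩)
    have hd1q : ∀ w : X, ∀ b ∈ B1, w ∈ b → w ∈ p → ∀ q ∈ P.erase p, Disjoint b q := by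
      intro w b hbB1 hwb hwp q hq
      have hqP : q ∈ P := Finset.mem_of_mem_erase hq
      have hqnp : q ≠ p := Finset.ne_of_mem_erase hq
      rw [Finset.disjoint_left]
      intro z hzb hzq
      have hzS : z ∈ S := hPS q hqP hzq
      have hwS : w ∈ S := hPS p hp hwp
      have : z = w := hB1single b hbB1 z (Finset.mem_inter.mpr ⟨hzb, hzS⟩) w
        (Finset.mem_inter.mpr ⟨hwb, hwS⟩)
      subst this
      exact Finset.disjoint_left.mp (hPdisj q hqP p hp hqnp) hzq hwp
    set Q := insert b1 (insert b2 (P.erase p)) with hQ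
    have hmemQ : ∀ c : Finset X, c ∈ Q ↔ c = b1 ∨ c = b2 ∨ c ∈ P.erase p := by
      intro c
      rw [hQ]
      simp [Finset.mem_insert]
    have hb1nP : b1 ∉ P := hB1nP b1 hb1B1
    have hb2nP : b2 ∉ P := hB1nP b2 hb2B1
    have hQB : Q ⊆ B := by
      intro c hc
      rcases (hmemQ c).mp hc with rfl | rfl | hc
      · exact hB1B hb1B1
      · exact hB1B hb2B1
      · exact hPB (Finset.mem_of_mem_erase hc)
    have hQd : ∀ c1 ∈ Q, ∀ c2 ∈ Q, c1 ≠ c2 → Disjoint c1 c2 := by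
      intro c1 h1 c2 h2 hne
      rcases (hmemQ c1).mp h1 with rfl | rfl | hm1
      · rcases (hmemQ c2).mp h2 with rfl | rfl | hm2
        · exact absurd rfl hne
        · exact hd12
        · exact hd1q x c1 hb1B1 hxb1 hxp c2 hm2
      · rcases (hmemQ c2).mp h2 with rfl | rfl | hm2
        · exact hd12.symm
        · exact absurd rfl hne
        · exact hd1q y c1 hb2B1 hyb2 hyp c2 hm2
      · rcases (hmemQ c2).mp h2 with rfl | rfl | hm2
        · exact (hd1q x c2 hb1B1 hxb1 hxp c1 hm1).symm
        · exact (hd1q y c2 hb2B1 hyb2 hyp c1 hm1).symm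
        · exact hPdisj c1 (Finset.mem_of_mem_erase hm1) c2 (Finset.mem_of_mem_erase hm2) hne
    have hb2mem : b2 ∉ P.erase p := fun h => hb2nP (Finset.mem_of_mem_erase h)
    have hb1mem : b1 ∉ insert b2 (P.erase p) := by
      intro h
      rcases Finset.mem_insert.mp h with h | h
      · exact hne12 h
      · exact hb1nP (Finset.mem_of_mem_erase h)
    have hρpos : 1 ≤ ρ := by
      rw [← hPcard]
      exact Finset.card_pos.mpr ⟨p, hp⟩
    have hQcard : Q.card = ρ + 1 := by
      rw [hQ, Finset.card_insert_of_notMem hb1mem, Finset.card_insert_of_notMem hb2mem,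
        Finset.card_erase_of_mem hp, hPcard]
      omega
    have := hmax Q hQB hQd
    omega
  -- grouping of B1 by blocks of P
  set F : Finset X → Finset (Finset X) := fun p => B1.filter (fun b => (b ∩ p).Nonempty) with hF
  have hFdisj : ∀ p1 ∈ P, ∀ p2 ∈ P, p1 ≠ p2 → Disjoint (F p1) (F p2) := by
    intro p1 h1 p2 h2 hne
    rw [Finset.disjoint_left]
    intro b hb1 hb2
    obtain ⟨hbB1, z1, hz1⟩ := Finset.mem_filter.mp hb1
    obtain ⟨_, z2, hz2⟩ := Finset.mem_filter.mp hb2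
    obtain ⟨hz1b, hz1p⟩ := Finset.mem_inter.mp hz1
    obtain ⟨hz2b, hz2p⟩ := Finset.mem_inter.mp hz2
    have e : z1 = z2 := hB1single b hbB1 z1 (Finset.mem_inter.mpr ⟨hz1b, hPS p1 h1 hz1p⟩)
      z2 (Finset.mem_inter.mpr ⟨hz2b, hPS p2 h2 hz2p⟩)
    exact Finset.disjoint_left.mp (hPdisj p1 h1 p2 h2 hne) hz1p (e ▸ hz2p)
  have hB1eq : B1 = P.biUnion F := by
    apply Finset.Subset.antisymm
    · intro b hb
      obtain ⟨z, hz⟩ := hmeet b (hB1B hb)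
      obtain ⟨hzb, hzS⟩ := Finset.mem_inter.mp hz
      obtain ⟨p, hp, hzp⟩ := Finset.mem_biUnion.mp hzS
      exact Finset.mem_biUnion.mpr ⟨p, hp,
        Finset.mem_filter.mpr ⟨hb, z, Finset.mem_inter.mpr ⟨hzb, hzp⟩⟩⟩
    · intro b hb
      obtain ⟨p, hp, hbp⟩ := Finset.mem_biUnion.mp hb
      exact (Finset.mem_filter.mp hbp).1
  -- per-P-block bound
  have hperp : ∀ p ∈ P, 2 * (F p).card + 3 * ρ ≤ Fintype.card X := by
    intro p hp
    set d : X → ℕ := fun x => (B1.filter (fun b => x ∈ b)).card with hd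
    have hxdisj : ∀ x1 ∈ p, ∀ x2 ∈ p, x1 ≠ x2 →
        Disjoint (B1.filter (fun b => x1 ∈ b)) (B1.filter (fun b => x2 ∈ b)) := by
      intro x1 h1 x2 h2 hne
      rw [Finset.disjoint_left]
      intro b hb1 hb2
      obtain ⟨hbB1, hx1b⟩ := Finset.mem_filter.mp hb1
      obtain ⟨_, hx2b⟩ := Finset.mem_filter.mp hb2
      exact hne (hB1single b hbB1 x1 (Finset.mem_inter.mpr ⟨hx1b, hPS p hp h1⟩)
        x2 (Finset.mem_inter.mpr ⟨hx2b, hPS p hp h2⟩))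
    have hFpbi : F p = p.biUnion (fun x => B1.filter (fun b => x ∈ b)) := by
      apply Finset.Subset.antisymm
      · intro b hb
        obtain ⟨hbB1, z, hz⟩ := Finset.mem_filter.mp hb
        obtain ⟨hzb, hzp⟩ := Finset.mem_inter.mp hz
        exact Finset.mem_biUnion.mpr ⟨z, hzp, Finset.mem_filter.mpr ⟨hbB1, hzb⟩⟩
      · intro b hb
        obtain ⟨z, hzp, hbz⟩ := Finset.mem_biUnion.mp hb
        obtain ⟨hbB1, hzb⟩ := Finset.mem_filter.mp hbz
        exact Finset.mem_filter.mpr ⟨hbB1, z, Finset.mem_inter.mpr ⟨hzb, hzp⟩⟩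
    have hFpcard : (F p).card = ∑ x ∈ p, d x := by
      rw [hFpbi, Finset.card_biUnion hxdisj]
    by_cases hbig : ∃ x ∈ p, 3 ≤ d x
    · obtain ⟨x, hxp, hx3⟩ := hbig
      have hz : ∀ y ∈ p, y ≠ x → d y = 0 := by
        intro y hyp hyx
        by_contra hdy
        obtain ⟨b2, hb2⟩ := Finset.card_pos.mp (Nat.pos_of_ne_zero hdy)
        -- inject blocks through x into b2 \ S
        have hfex : ∀ b : Finset X, ∃ z : X,
            b ∈ B1.filter (fun b => x ∈ b) → z ∈ b \ S ∧ z ∈ b2 \ S := by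
          intro b
          by_cases hb : b ∈ B1.filter (fun c => x ∈ c)
          · have := hcross p hp x hxp y hyp (fun h => hyx h.symm) b hb b2 hb2
            obtain ⟨z, hz1, hz2⟩ := Finset.not_disjoint_iff.mp this
            exact ⟨z, fun _ => ⟨hz1, hz2⟩⟩
          · exact ⟨Classical.arbitrary _, fun h => absurd h hb⟩
        choose f hf using hfex
        have hinj : (B1.filter (fun b => x ∈ b)).card ≤ (b2 \ S).card := by
          apply Finset.card_le_card_of_injOn f
          · intro b hb
            exact (hf b hb).2
          · intro c1 h1 c2 h2 heq
            simp only [Finset.mem_coe] at h1 h2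
            by_contra hne
            have hdisj := houtdisj x (hPS p hp hxp) c1 h1 c2 h2 hne
            exact Finset.disjoint_left.mp hdisj (hf c1 h1).1 (heq ▸ (hf c2 h2).1)
        rw [houtcard b2 (Finset.mem_filter.mp hb2).1] at hinj
        have : d x ≤ 2 := hinj
        omega
      have hsum : ∑ x' ∈ p, d x' = d x :=
        Finset.sum_eq_single_of_mem x hxp (fun y hyp hyx => hz y hyp hyx)
      rw [hFpcard, hsum]
      exact hdx x (hPS p hp hxp) 
    · push_neg at hbig
      have hsum : ∑ x ∈ p, d x ≤ 6 := by
        calc ∑ x ∈ p, d x ≤ ∑ _x ∈ p, 2 :=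
              Finset.sum_le_sum (fun x hx => Nat.lt_succ_iff.mp (hbig x hx))
          _ = 6 := by
              rw [Finset.sum_const, hcard p (hPB hp)]; rfl
      rw [hFpcard]
      omega
  have hB1sum : B1.card = ∑ p ∈ P, (F p).card := by
    rw [hB1eq, Finset.card_biUnion hFdisj]
  have h1 : 2 * B1.card + 3 * ρ * ρ ≤ ρ * Fintype.card X := by
    have := Finset.sum_le_sum hperp
    rw [Finset.sum_add_distrib, Finset.sum_const, Finset.sum_const, hPcard, ← Finset.mul_sum,
      ← hB1sum, smul_eq_mul, smul_eq_mul] at this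
    calc 2 * B1.card + 3 * ρ * ρ = 2 * B1.card + ρ * (3 * ρ) := by ring
      _ ≤ ρ * Fintype.card X := this
  -- choose arithmetic
  have hch : 2 * ((3 * ρ).choose 2) + 3 * ρ = 9 * (ρ * ρ) := by
    have key : ∀ n : ℕ, 2 * (n.choose 2) + n = n * n := by
      intro n
      rw [Nat.choose_two_right]
      have he : 2 ∣ n * (n - 1) := by
        rcases Nat.even_or_odd n with h | h
        · exact Dvd.dvd.mul_right h.two_dvd _
        · rcases n with _ | m
          · simp
          · exact Dvd.dvd.mul_left (by
              simpa [Nat.succ_sub_one] using (Nat.Odd.sub_odd h odd_one).two_dvd) _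
      rw [Nat.mul_div_cancel' he]
      rcases n with _ | m
      · rfl
      · simp [Nat.succ_sub_one]; ring
    have := key (3 * ρ)
    calc 2 * ((3 * ρ).choose 2) + 3 * ρ = (3 * ρ) * (3 * ρ) := this
      _ = 9 * (ρ * ρ) := by ring
  -- final assembly over ℚ
  have hB2split : (B2 \ P).card + ρ = B2.card := by
    rw [← hPcard]
    exact Finset.card_sdiff_add_card_eq_card hPB2
  have q1 : (2 : ℚ) * B1.card + 3 * ρ * ρ ≤ (ρ : ℚ) * (Fintype.card X : ℚ) := by
    exact_mod_cast h1
  have q2 : ((B2 \ P).card : ℚ) + 3 * ρ ≤ ((3 * ρ).choose 2 : ℚ) := by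
    exact_mod_cast hkey2
  have q3 : (2 : ℚ) * ((3 * ρ).choose 2 : ℚ) + 3 * ρ = 9 * (ρ * ρ) := by
    exact_mod_cast hch
  have q4 : ((B2 \ P).card : ℚ) + ρ = (B2.card : ℚ) := by exact_mod_cast hB2split
  have q5 : (B.card : ℚ) = (B1.card : ℚ) + (B2.card : ℚ) := by exact_mod_cast hsplit
  linarith
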